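/- Let n, M, N ≥ 1 and d = 2^n. Suppose C = Σ_{r ∈ Perm(1,…,M+N)} C_{P r F}, where each C_{P r F} is a positive semidefinite matrix on P ⊗ (⊗_{i=1}^M I_i ⊗ O_i) ⊗ (⊗_{j=1}^N I′_j ⊗ O′_j) ⊗ F (all I_i, O_i, I′_j, O′_j, P_T, F_T ≅ ℂ^d; P_C, F_C ≅ ℂ²; P = P_C ⊗ P_T, F = F_C ⊗ F_T), and suppose C ∗ (A^{⊗M} ⊗ B^{⊗N}) = |S_SWITCH⟩⟨S_SWITCH| ∗ (A ⊗ B) for all Choi matrices A and B of mixed unitary n-qubit channels (or, if N = 1, for all mixed unitary A and all B = |V⟩⟩⟨⟨V| with V unitary). Then each C_{P r F} admits a decomposition C_{P r F} = Σ_a |C_r^{(a)}⟩⟨C_r^{(a)}| such that for every a, every permutation r, and all n-qubit unitaries U_1,…,U_M, V_1,…,V_N there exist complex numbers ξ^{(a),r}_{kl} (depending on the unitaries) with |C_r^{(a)}⟩ ∗ (|U_1⟩⟩ ⊗ ⋯ ⊗ |U_M⟩⟩ ⊗ |V_1⟩⟩ ⊗ ⋯ ⊗ |V_N⟩⟩)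 = Σ_{k=1}^M Σ_{l=1}^N ξ^{(a),r}_{kl} |S_SWITCH⟩ ∗ (|U_k⟩⟩ ⊗ |V_l⟩⟩). -/

import Mathlib

/-- Index of `ℂ^d` with `d = 2^n`. -/
abbrev Dix (n : ℕ) := Fin (2 ^ n)
/-- Index of a slot `I ⊗ O` (two copies of `ℂ^{2^n}`). -/
abbrev Sl (n : ℕ) := Dix n × Dix n
/-- Index of `P = P_C ⊗ P_T` (resp. `F = F_C ⊗ F_T`): `ℂ² ⊗ ℂ^{2^n}`. -/
abbrev PFix (n : ℕ) := Fin 2 × Dix n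

/-- Choi vector `|A⟩⟩ = Σ_i e_i ⊗ A e_i`: component at `(i, j)` is `A j i`. -/
noncomputable def choiV {n : ℕ} (A : Matrix (Dix n) (Dix n) ℂ) : Sl n → ℂ :=
  fun x => A x.2 x.1

/-- Component of the switch Choi vector `|S_SWITCH⟩` at `P`-index `p`, `(I,O)`-index `io`,
`(I′,O′)`-index `jo` and `F`-index `f`:
`|S⟩ = |0⟩|0⟩|1⟩⟩^{P_T I}|1⟩⟩^{O I′}|1⟩⟩^{O′ F_T} + |1⟩|1⟩|1⟩⟩^{P_T I′}|1⟩⟩^{O′ I}|1⟩⟩^{O F_T}`. -/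
noncomputable def swVec {n : ℕ} (p : PFix n) (io jo : Sl n) (f : PFix n) : ℂ :=
  (if p.1 = 0 ∧ f.1 = 0 ∧ p.2 = io.1 ∧ io.2 = jo.1 ∧ jo.2 = f.2 then 1 else 0) +
  (if p.1 = 1 ∧ f.1 = 1 ∧ p.2 = jo.1 ∧ jo.2 = io.1 ∧ io.2 = f.2 then 1 else 0)

/-- The contraction `|S_SWITCH⟩ ∗ (|U⟩⟩ ⊗ |V⟩⟩)`, a vector on `P ⊗ F`. -/
noncomputable def swLink {n : ℕ} (U V : Matrix (Dix n) (Dix n) ℂ) : PFix n × PFix n → ℂ :=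
  fun pf => ∑ io : Sl n, ∑ jo : Sl n, swVec pf.1 io jo pf.2 * choiV U io * choiV V jo

open scoped ComplexConjugate ComplexOrder

/-- Index of the full space `P ⊗ (⊗_{i=1}^M I_i ⊗ O_i) ⊗ (⊗_{j=1}^N I′_j ⊗ O′_j) ⊗ F`. -/
abbrev FullIx (n M N : ℕ) := PFix n × (Fin M → Sl n) × (Fin N → Sl n) × PFix n

/-- The contraction `|C⟩ ∗ (|U_1⟩⟩ ⊗ ⋯ ⊗ |U_M⟩⟩ ⊗ |V_1⟩⟩ ⊗ ⋯ ⊗ |V_N⟩⟩)`, a vector on `P ⊗ F`. -/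
noncomputable def linkC2 {n M N : ℕ} (C : FullIx n M N → ℂ)
    (U : Fin M → Matrix (Dix n) (Dix n) ℂ) (V : Fin N → Matrix (Dix n) (Dix n) ℂ) :
    PFix n × PFix n → ℂ :=
  fun pf => ∑ s : Fin M → Sl n, ∑ t : Fin N → Sl n,
    C (pf.1, s, t, pf.2) * (∏ i, choiV (U i) (s i)) * ∏ j, choiV (V j) (t j)

/-- The matrix link product `C ∗ (A^{⊗M} ⊗ B^{⊗N})`, written entrywise:
the `i`-th copy of `A` is inserted on `I_i ⊗ O_i`, the `j`-th copy of `B` on `I′_j ⊗ O′_j`,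
and all slot systems are contracted, leaving an operator on `P ⊗ F`. -/
noncomputable def linkMat {n M N : ℕ} (C : Matrix (FullIx n M N) (FullIx n M N) ℂ)
    (A B : Matrix (Sl n) (Sl n) ℂ) :
    Matrix (PFix n × PFix n) (PFix n × PFix n) ℂ :=
  fun x y => ∑ s : Fin M → Sl n, ∑ s' : Fin M → Sl n, ∑ t : Fin N → Sl n, ∑ t' : Fin N → Sl n,
    C ((x.1, s, t, x.2)) ((y.1, s', t', y.2)) *
      (∏ i, A (s i) (s' i)) * ∏ j, B (t j) (t' j)

/-- The matrix link product `|S_SWITCH⟩⟨S_SWITCH| ∗ (A ⊗ B)`, an operator on `P ⊗ F`. -/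
noncomputable def switchMat {n : ℕ} (A B : Matrix (Sl n) (Sl n) ℂ) :
    Matrix (PFix n × PFix n) (PFix n × PFix n) ℂ :=
  fun x y => ∑ io : Sl n, ∑ io' : Sl n, ∑ jo : Sl n, ∑ jo' : Sl n,
    swVec x.1 io jo x.2 * conj (swVec y.1 io' jo' y.2) * A io io' * B jo jo'

/-- `A` is the Choi matrix of a mixed unitary channel:
`A = Σ_j p_j |U_j⟩⟩⟨⟨U_j|` with `p_j ≥ 0`, `Σ_j p_j = 1`, `U_j` unitary. -/
def IsMixedUnitaryChoi {n : ℕ} (A : Matrix (Sl n) (Sl n) ℂ) : Prop :=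
  ∃ (m : ℕ) (p : Fin m → ℝ) (U : Fin m → Matrix (Dix n) (Dix n) ℂ),
    (∀ j, 0 ≤ p j) ∧ (∑ j, p j = 1) ∧
    (∀ j, U j ∈ Matrix.unitaryGroup (Dix n) ℂ) ∧
    A = ∑ j, (p j : ℂ) • Matrix.vecMulVec (choiV (U j)) (star (choiV (U j)))


section AuxSwitchProof
open scoped ComplexConjugate ComplexOrder

noncomputable def prW {ι : Type*} [Fintype ι] (w u : ι → ℂ) : ℂ := ∑ x, conj (w x) * u x

noncomputable def qf {ι : Type*} [Fintype ι] (w : ι → ℂ) (X : Matrix ι ι ℂ) : ℂ :=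
  ∑ x, ∑ y, conj (w x) * X x y * w y

lemma psd_decomp {ι : Type*} [Fintype ι] [DecidableEq ι] (A : Matrix ι ι ℂ) (h : A.PosSemidef) :
    ∃ (m : ℕ) (v : Fin m → ι → ℂ),
      A = ∑ a, Matrix.vecMulVec (v a) (star (v a)) := by
  obtain ⟨B, hB⟩ : ∃ B : Matrix ι ι ℂ, A = Matrix.conjTranspose B * B := by
    open scoped MatrixOrder in
    obtain ⟨B, hB⟩ := CStarAlgebra.nonneg_iff_eq_star_mul_self.mp h.nonneg
    exact ⟨B, hB⟩
  refine ⟨Fintype.card ι, fun a x => conj (B ((Fintype.equivFin ι).symm a) x), ?_⟩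
  rw [hB]
  ext x y
  rw [Matrix.sum_apply, Matrix.mul_apply]
  rw [← Equiv.sum_comp (Fintype.equivFin ι).symm (fun b => Matrix.conjTranspose B x b * B b y)]
  refine Finset.sum_congr rfl fun a _ => ?_
  simp [Matrix.vecMulVec_apply, Matrix.conjTranspose_apply, mul_comm]

lemma prod_expand {n K1 : ℕ} (M : ℕ) (p : Fin K1 → ℂ) (U : Fin K1 → Matrix (Dix n) (Dix n) ℂ)
    (s s' : Fin M → Sl n) :
    (∏ i : Fin M, (∑ k, p k * (choiV (U k) (s i) * conj (choiV (U k) (s' i)))))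
    = ∑ g : Fin M → Fin K1, (∏ i, p (g i)) * ((∏ i, choiV (U (g i)) (s i)) *
        ∏ i, conj (choiV (U (g i)) (s' i))) := by
  rw [Finset.prod_univ_sum, Fintype.piFinset_univ]
  exact Finset.sum_congr rfl fun g _ => by rw [Finset.prod_mul_distrib, Finset.prod_mul_distrib]

lemma linkMat_rank1 {n M N K1 K2 : ℕ} (u : FullIx n M N → ℂ)
    (p : Fin K1 → ℂ) (q : Fin K2 → ℂ)
    (U : Fin K1 → Matrix (Dix n) (Dix n) ℂ) (V : Fin K2 → Matrix (Dix n) (Dix n) ℂ)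
    (x y : PFix n × PFix n) :
    linkMat (Matrix.vecMulVec u (star u))
      (∑ k, p k • Matrix.vecMulVec (choiV (U k)) (star (choiV (U k))))
      (∑ l, q l • Matrix.vecMulVec (choiV (V l)) (star (choiV (V l)))) x y
    = ∑ g : Fin M → Fin K1, ∑ h : Fin N → Fin K2,
        ((∏ i, p (g i)) * (∏ j, q (h j))) *
          (linkC2 u (U ∘ g) (V ∘ h) x * conj (linkC2 u (U ∘ g) (V ∘ h) y)) := by
  simp only [linkMat, Matrix.sum_apply, Matrix.smul_apply, Matrix.vecMulVec_apply,
    Pi.star_apply, RCLike.star_def, smul_eq_mul, prod_expand]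
  simp only [Finset.mul_sum, Finset.sum_mul]
  conv_rhs => simp only [linkC2, map_sum, map_mul, map_prod, Finset.mul_sum, Finset.sum_mul]
  conv_lhs => enter [2,a0,2,a1,2,a2,2,a3]; rw [Finset.sum_comm]
  conv_lhs => enter [2,a0,2,a1,2,a2]; rw [Finset.sum_comm]
  conv_lhs => enter [2,a0,2,a1]; rw [Finset.sum_comm]
  conv_lhs => enter [2,a0]; rw [Finset.sum_comm]
  rw [Finset.sum_comm]
  conv_lhs => enter [2,a0,2,a1,2,a2,2,a3]; rw [Finset.sum_comm]
  conv_lhs => enter [2,a0,2,a1,2,a2]; rw [Finset.sum_comm]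
  conv_lhs => enter [2,a0,2,a1]; rw [Finset.sum_comm]
  conv_lhs => enter [2,a0]; rw [Finset.sum_comm]
  conv_lhs => enter [2,a0,2,a1]; rw [Finset.sum_comm]
  conv_lhs => enter [2,a0,2,a1,2,a2,2,a3]; rw [Finset.sum_comm]
  conv_lhs => enter [2,a0,2,a1,2,a2]; rw [Finset.sum_comm]
  refine Finset.sum_congr rfl fun g _ => Finset.sum_congr rfl fun h _ =>
    Finset.sum_congr rfl fun s' _ => Finset.sum_congr rfl fun t' _ =>
    Finset.sum_congr rfl fun s _ => Finset.sum_congr rfl fun t _ => ?_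
  simp only [Function.comp_apply]
  ring

lemma switchMat_rank1 {n K1 K2 : ℕ}
    (p : Fin K1 → ℂ) (q : Fin K2 → ℂ)
    (U : Fin K1 → Matrix (Dix n) (Dix n) ℂ) (V : Fin K2 → Matrix (Dix n) (Dix n) ℂ)
    (x y : PFix n × PFix n) :
    switchMat
      (∑ k, p k • Matrix.vecMulVec (choiV (U k)) (star (choiV (U k))))
      (∑ l, q l • Matrix.vecMulVec (choiV (V l)) (star (choiV (V l)))) x y
    = ∑ k, ∑ l, (p k * q l) *
          (swLink (U k) (V l) x * conj (swLink (U k) (V l) y)) := by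
  simp only [switchMat, Matrix.sum_apply, Matrix.smul_apply, Matrix.vecMulVec_apply,
    Pi.star_apply, RCLike.star_def, smul_eq_mul]
  simp only [Finset.mul_sum, Finset.sum_mul]
  conv_rhs => simp only [swLink, map_sum, map_mul, map_add, Finset.mul_sum, Finset.sum_mul]
  conv_lhs => enter [2,a0,2,a1,2,a2,2,a3]; rw [Finset.sum_comm]
  conv_lhs => enter [2,a0,2,a1,2,a2]; rw [Finset.sum_comm]
  conv_lhs => enter [2,a0,2,a1]; rw [Finset.sum_comm]
  conv_lhs => enter [2,a0]; rw [Finset.sum_comm]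
  rw [Finset.sum_comm]
  conv_lhs => enter [2,a0,2,a1,2,a2,2,a3]; rw [Finset.sum_comm]
  conv_lhs => enter [2,a0,2,a1,2,a2]; rw [Finset.sum_comm]
  conv_lhs => enter [2,a0,2,a1]; rw [Finset.sum_comm]
  conv_lhs => enter [2,a0]; rw [Finset.sum_comm]
  conv_lhs => enter [2,a0,2,a1]; rw [Finset.sum_comm]
  conv_lhs => enter [2,a0,2,a1,2,a2,2,a3]; rw [Finset.sum_comm]
  conv_lhs => enter [2,a0,2,a1,2,a2]; rw [Finset.sum_comm]
  refine Finset.sum_congr rfl fun g _ => Finset.sum_congr rfl fun h _ =>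
    Finset.sum_congr rfl fun s' _ => Finset.sum_congr rfl fun t' _ =>
    Finset.sum_congr rfl fun s _ => Finset.sum_congr rfl fun t _ => ?_
  ring

lemma qf_sum {ι κ : Type*} [Fintype ι] [Fintype κ] (w : ι → ℂ) (X : κ → Matrix ι ι ℂ) :
    qf w (∑ z, X z) = ∑ z, qf w (X z) := by
  simp only [qf, Matrix.sum_apply, Finset.mul_sum, Finset.sum_mul]
  conv_lhs => enter [2,a0]; rw [Finset.sum_comm]
  rw [Finset.sum_comm]

lemma qf_linkMat_rank1 {n M N K1 K2 : ℕ} (w : PFix n × PFix n → ℂ) (u : FullIx n M N → ℂ)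
    (p : Fin K1 → ℂ) (q : Fin K2 → ℂ)
    (U : Fin K1 → Matrix (Dix n) (Dix n) ℂ) (V : Fin K2 → Matrix (Dix n) (Dix n) ℂ) :
    qf w (linkMat (Matrix.vecMulVec u (star u))
      (∑ k, p k • Matrix.vecMulVec (choiV (U k)) (star (choiV (U k))))
      (∑ l, q l • Matrix.vecMulVec (choiV (V l)) (star (choiV (V l)))))
    = ∑ g : Fin M → Fin K1, ∑ h : Fin N → Fin K2,
        ((∏ i, p (g i)) * (∏ j, q (h j))) *
          (prW w (linkC2 u (U ∘ g) (V ∘ h)) * conj (prW w (linkC2 u (U ∘ g) (V ∘ h)))) := by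
  simp only [qf, linkMat_rank1]
  simp only [Finset.mul_sum, Finset.sum_mul]
  conv_rhs => simp only [prW, map_sum, map_mul, Finset.mul_sum, Finset.sum_mul]
  conv_lhs => enter [2,a0]; rw [Finset.sum_comm]
  rw [Finset.sum_comm]
  conv_lhs => enter [2,a0,2,a1]; rw [Finset.sum_comm]
  conv_lhs => enter [2,a0]; rw [Finset.sum_comm]
  conv_lhs => enter [2,a0,2,a1]; rw [Finset.sum_comm]
  refine Finset.sum_congr rfl fun g _ => Finset.sum_congr rfl fun h _ =>
    Finset.sum_congr rfl fun y _ => Finset.sum_congr rfl fun x _ => ?_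
  simp only [Complex.conj_conj]
  ring

lemma qf_switchMat_rank1 {n K1 K2 : ℕ} (w : PFix n × PFix n → ℂ)
    (p : Fin K1 → ℂ) (q : Fin K2 → ℂ)
    (U : Fin K1 → Matrix (Dix n) (Dix n) ℂ) (V : Fin K2 → Matrix (Dix n) (Dix n) ℂ) :
    qf w (switchMat
      (∑ k, p k • Matrix.vecMulVec (choiV (U k)) (star (choiV (U k))))
      (∑ l, q l • Matrix.vecMulVec (choiV (V l)) (star (choiV (V l)))))
    = ∑ k, ∑ l, (p k * q l) *
          (prW w (swLink (U k) (V l)) * conj (prW w (swLink (U k) (V l)))) := by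
  simp only [qf, switchMat_rank1]
  simp only [Finset.mul_sum, Finset.sum_mul]
  conv_rhs => simp only [prW, map_sum, map_mul, Finset.mul_sum, Finset.sum_mul]
  conv_lhs => enter [2,a0]; rw [Finset.sum_comm]
  rw [Finset.sum_comm]
  conv_lhs => enter [2,a0,2,a1]; rw [Finset.sum_comm]
  conv_lhs => enter [2,a0]; rw [Finset.sum_comm]
  conv_lhs => enter [2,a0,2,a1]; rw [Finset.sum_comm]
  refine Finset.sum_congr rfl fun g _ => Finset.sum_congr rfl fun h _ =>
    Finset.sum_congr rfl fun y _ => Finset.sum_congr rfl fun x _ => ?_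
  simp only [Complex.conj_conj]
  ring

lemma linkMat_sum {n M N : ℕ} {κ : Type*} [Fintype κ]
    (Cz : κ → Matrix (FullIx n M N) (FullIx n M N) ℂ) (A B : Matrix (Sl n) (Sl n) ℂ) :
    linkMat (∑ z, Cz z) A B = ∑ z, linkMat (Cz z) A B := by
  ext x y
  simp only [linkMat, Matrix.sum_apply, Finset.sum_mul]
  conv_lhs => enter [2,a0,2,a1,2,a2]; rw [Finset.sum_comm]
  conv_lhs => enter [2,a0,2,a1]; rw [Finset.sum_comm]
  conv_lhs => enter [2,a0]; rw [Finset.sum_comm]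
  rw [Finset.sum_comm]

lemma key_vanish {n M N : ℕ} (hM : 1 ≤ M) (hN : 1 ≤ N)
    (C : Matrix (FullIx n M N) (FullIx n M N) ℂ)
    (m : Equiv.Perm (Fin (M + N)) → ℕ)
    (v : ∀ r : Equiv.Perm (Fin (M + N)), Fin (m r) → FullIx n M N → ℂ)
    (hC : C = ∑ r, ∑ a, Matrix.vecMulVec (v r a) (star (v r a)))
    (hsim :
      (∀ A B : Matrix (Sl n) (Sl n) ℂ, IsMixedUnitaryChoi A → IsMixedUnitaryChoi B →
        linkMat C A B = switchMat A B) ∨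
      (N = 1 ∧ ∀ (A : Matrix (Sl n) (Sl n) ℂ) (V : Matrix (Dix n) (Dix n) ℂ),
        IsMixedUnitaryChoi A → V ∈ Matrix.unitaryGroup (Dix n) ℂ →
        linkMat C A (Matrix.vecMulVec (choiV V) (star (choiV V))) =
          switchMat A (Matrix.vecMulVec (choiV V) (star (choiV V)))))
    (U : Fin M → Matrix (Dix n) (Dix n) ℂ) (V : Fin N → Matrix (Dix n) (Dix n) ℂ)
    (hU : ∀ i, U i ∈ Matrix.unitaryGroup (Dix n) ℂ)
    (hV : ∀ j, V j ∈ Matrix.unitaryGroup (Dix n) ℂ)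
    (w : PFix n × PFix n → ℂ)
    (hw : ∀ k l, prW w (swLink (U k) (V l)) = 0) :
    ∀ r a, prW w (linkC2 (v r a) U V) = 0 := by
  have hM0 : ((M : ℝ)) ≠ 0 := Nat.cast_ne_zero.mpr (by omega)
  have hN0 : ((N : ℝ)) ≠ 0 := Nat.cast_ne_zero.mpr (by omega)
  set p : Fin M → ℝ := fun _ => (M : ℝ)⁻¹ with hp
  set q : Fin N → ℝ := fun _ => (N : ℝ)⁻¹ with hq
  set A : Matrix (Sl n) (Sl n) ℂ :=
    ∑ k, ((p k : ℝ) : ℂ) • Matrix.vecMulVec (choiV (U k)) (star (choiV (U k))) with hA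
  set B : Matrix (Sl n) (Sl n) ℂ :=
    ∑ l, ((q l : ℝ) : ℂ) • Matrix.vecMulVec (choiV (V l)) (star (choiV (V l))) with hB
  have hpsum : ∑ j, p j = 1 := by
    rw [hp, Finset.sum_const, Finset.card_univ, Fintype.card_fin, nsmul_eq_mul,
      mul_inv_cancel₀ hM0]
  have hqsum : ∑ j, q j = 1 := by
    rw [hq, Finset.sum_const, Finset.card_univ, Fintype.card_fin, nsmul_eq_mul,
      mul_inv_cancel₀ hN0]
  have hAmu : IsMixedUnitaryChoi A := ⟨M, p, U, fun _ => by positivity, hpsum, hU, hA⟩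
  have hBmu : IsMixedUnitaryChoi B := ⟨N, q, V, fun _ => by positivity, hqsum, hV, hB⟩
  have hEq : linkMat C A B = switchMat A B := by
    rcases hsim with h1 | ⟨hN1, h2⟩
    · exact h1 A B hAmu hBmu
    · subst hN1
      have hBeq : B = Matrix.vecMulVec (choiV (V 0)) (star (choiV (V 0))) := by
        rw [hB]
        simp [hq]
      rw [hBeq]
      exact h2 A (V 0) hAmu (hV 0)
  -- quadratic form of the switch side vanishes
  have hq0 : qf w (switchMat A B) = 0 := by
    rw [hA, hB, qf_switchMat_rank1]
    simp [hw]
  -- expand the C side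
  have hexp : qf w (linkMat C A B) =
      ∑ r, ∑ a, ∑ g : Fin M → Fin M, ∑ h : Fin N → Fin N,
        ((∏ i, ((p (g i) : ℝ) : ℂ)) * (∏ j, ((q (h j) : ℝ) : ℂ))) *
          (prW w (linkC2 (v r a) (U ∘ g) (V ∘ h)) *
            conj (prW w (linkC2 (v r a) (U ∘ g) (V ∘ h)))) := by
    rw [hC, linkMat_sum, qf_sum]
    refine Finset.sum_congr rfl fun r _ => ?_
    rw [linkMat_sum, qf_sum]
    exact Finset.sum_congr rfl fun a _ => by rw [hA, hB, qf_linkMat_rank1]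
  have hz : qf w (linkMat C A B) = 0 := by rw [hEq, hq0]
  -- realify
  have hreal : ∑ r, ∑ a : Fin (m r), ∑ g : Fin M → Fin M, ∑ h : Fin N → Fin N,
      (((M : ℝ)⁻¹ ^ M * (N : ℝ)⁻¹ ^ N) *
        Complex.normSq (prW w (linkC2 (v r a) (U ∘ g) (V ∘ h)))) = 0 := by
    have hterm : ∀ (r : Equiv.Perm (Fin (M + N))) (a : Fin (m r)) (g : Fin M → Fin M)
        (h : Fin N → Fin N),
        ((((M : ℝ)⁻¹ ^ M * (N : ℝ)⁻¹ ^ N) *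
          Complex.normSq (prW w (linkC2 (v r a) (U ∘ g) (V ∘ h))) : ℝ) : ℂ) =
        ((∏ i, ((p (g i) : ℝ) : ℂ)) * (∏ j, ((q (h j) : ℝ) : ℂ))) *
          (prW w (linkC2 (v r a) (U ∘ g) (V ∘ h)) *
            conj (prW w (linkC2 (v r a) (U ∘ g) (V ∘ h)))) := by
      intro r a g h
      rw [Complex.mul_conj, hp, hq]
      push_cast
      rw [Finset.prod_const, Finset.prod_const, Finset.card_univ, Finset.card_univ,
        Fintype.card_fin, Fintype.card_fin]
    apply Complex.ofReal_injective
    push_cast only [Complex.ofReal_sum, Complex.ofReal_zero]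
    calc ∑ r, ∑ a : Fin (m r), ∑ g : Fin M → Fin M, ∑ h : Fin N → Fin N,
        ((((M : ℝ)⁻¹ ^ M * (N : ℝ)⁻¹ ^ N) *
          Complex.normSq (prW w (linkC2 (v r a) (U ∘ g) (V ∘ h))) : ℝ) : ℂ)
        = qf w (linkMat C A B) := by
          rw [hexp]
          exact Finset.sum_congr rfl fun r _ => Finset.sum_congr rfl fun a _ =>
            Finset.sum_congr rfl fun g _ => Finset.sum_congr rfl fun h _ => hterm r a g h
      _ = 0 := hz
  -- each term vanishes
  have hnonneg : ∀ (r : Equiv.Perm (Fin (M + N))), (0:ℝ) ≤ ∑ a : Fin (m r), ∑ g : Fin M → Fin M, ∑ h : Fin N → Fin N,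
      (((M : ℝ)⁻¹ ^ M * (N : ℝ)⁻¹ ^ N) *
        Complex.normSq (prW w (linkC2 (v r a) (U ∘ g) (V ∘ h)))) := fun r =>
    Finset.sum_nonneg fun a _ => Finset.sum_nonneg fun g _ => Finset.sum_nonneg fun h _ =>
      mul_nonneg (by positivity) (Complex.normSq_nonneg _)
  intro r a
  have h1 := (Finset.sum_eq_zero_iff_of_nonneg (fun r _ => hnonneg r)).mp hreal r (Finset.mem_univ r)
  have hnn2 : ∀ a : Fin (m r), (0:ℝ) ≤ ∑ g : Fin M → Fin M, ∑ h : Fin N → Fin N,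
      (((M : ℝ)⁻¹ ^ M * (N : ℝ)⁻¹ ^ N) *
        Complex.normSq (prW w (linkC2 (v r a) (U ∘ g) (V ∘ h)))) := fun a =>
    Finset.sum_nonneg fun g _ => Finset.sum_nonneg fun h _ =>
      mul_nonneg (by positivity) (Complex.normSq_nonneg _)
  have h2 := (Finset.sum_eq_zero_iff_of_nonneg (fun a _ => hnn2 a)).mp h1 a (Finset.mem_univ a)
  have hnn3 : ∀ g : Fin M → Fin M, (0:ℝ) ≤ ∑ h : Fin N → Fin N,
      (((M : ℝ)⁻¹ ^ M * (N : ℝ)⁻¹ ^ N) *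
        Complex.normSq (prW w (linkC2 (v r a) (U ∘ g) (V ∘ h)))) := fun g =>
    Finset.sum_nonneg fun h _ => mul_nonneg (by positivity) (Complex.normSq_nonneg _)
  have h3 := (Finset.sum_eq_zero_iff_of_nonneg (fun g _ => hnn3 g)).mp h2 id (Finset.mem_univ id)
  have hnn4 : ∀ h : Fin N → Fin N, (0:ℝ) ≤
      (((M : ℝ)⁻¹ ^ M * (N : ℝ)⁻¹ ^ N) *
        Complex.normSq (prW w (linkC2 (v r a) (U ∘ id) (V ∘ h)))) := fun h => mul_nonneg (by positivity) (Complex.normSq_nonneg _)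
  have h4 := (Finset.sum_eq_zero_iff_of_nonneg (fun h _ => hnn4 h)).mp h3 id (Finset.mem_univ id)
  have hcoef : (0:ℝ) < (M : ℝ)⁻¹ ^ M * (N : ℝ)⁻¹ ^ N := by
    have : (0:ℝ) < (M:ℝ) := by positivity
    have : (0:ℝ) < (N:ℝ) := by positivity
    positivity
  have h5 : Complex.normSq (prW w (linkC2 (v r a) (U ∘ id) (V ∘ id))) = 0 := by
    rcases mul_eq_zero.mp h4 with h | h
    · exact absurd h (ne_of_gt hcoef)
    · exact h
  have := Complex.normSq_eq_zero.mp h5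
  rwa [Function.comp_id, Function.comp_id] at this

lemma inner_eq_prW {ι : Type*} [Fintype ι] (w u : EuclideanSpace ℂ ι) :
    (inner ℂ w u : ℂ) = prW w u := by
  simp [prW, PiLp.inner_apply, RCLike.inner_apply, mul_comm]

end AuxSwitchProof

/-- if `C = Σ_r C_r` with each `C_r` positive semidefinite (one matrix for
each permutation `r` of the `M + N` slots), and `C ∗ (A^{⊗M} ⊗ B^{⊗N}) = |S⟩⟨S| ∗ (A ⊗ B)`
for all mixed unitary Choi matrices `A, B` (or, if `N = 1`, for all mixed unitary `A` and
all unitary `B`), then each `C_r` decomposes as `Σ_a |C_r^{(a)}⟩⟨C_r^{(a)}|` where every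
contraction `|C_r^{(a)}⟩ ∗ (⊗_i |U_i⟩⟩ ⊗ ⊗_j |V_j⟩⟩)` is a linear combination of the
vectors `|S_SWITCH⟩ ∗ (|U_k⟩⟩ ⊗ |V_l⟩⟩)`. -/
theorem stmt_2 (n M N : ℕ) (hn : 1 ≤ n) (hM : 1 ≤ M) (hN : 1 ≤ N)
    (Cr : Equiv.Perm (Fin (M + N)) → Matrix (FullIx n M N) (FullIx n M N) ℂ)
    (hpos : ∀ r, (Cr r).PosSemidef)
    (C : Matrix (FullIx n M N) (FullIx n M N) ℂ) (hC : C = ∑ r, Cr r)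
    (hsim :
      (∀ A B : Matrix (Sl n) (Sl n) ℂ, IsMixedUnitaryChoi A → IsMixedUnitaryChoi B →
        linkMat C A B = switchMat A B) ∨
      (N = 1 ∧ ∀ (A : Matrix (Sl n) (Sl n) ℂ) (V : Matrix (Dix n) (Dix n) ℂ),
        IsMixedUnitaryChoi A → V ∈ Matrix.unitaryGroup (Dix n) ℂ →
        linkMat C A (Matrix.vecMulVec (choiV V) (star (choiV V))) =
          switchMat A (Matrix.vecMulVec (choiV V) (star (choiV V))))) :
    ∀ r : Equiv.Perm (Fin (M + N)),
      ∃ (m : ℕ) (v : Fin m → (FullIx n M N → ℂ)),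
        Cr r = ∑ a, Matrix.vecMulVec (v a) (star (v a)) ∧
        ∀ (a : Fin m) (U : Fin M → Matrix (Dix n) (Dix n) ℂ)
            (V : Fin N → Matrix (Dix n) (Dix n) ℂ),
          (∀ i, U i ∈ Matrix.unitaryGroup (Dix n) ℂ) →
          (∀ j, V j ∈ Matrix.unitaryGroup (Dix n) ℂ) →
          ∃ ξ : Fin M → Fin N → ℂ,
            linkC2 (v a) U V = fun pf => ∑ k, ∑ l, ξ k l * swLink (U k) (V l) pf := by
  have hdec0 : ∀ r : Equiv.Perm (Fin (M + N)), ∃ (m : ℕ) (v : Fin m → FullIx n M N → ℂ),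
      Cr r = ∑ a, Matrix.vecMulVec (v a) (star (v a)) := fun r => psd_decomp (Cr r) (hpos r)
  choose m v hdec using hdec0
  have hC2 : C = ∑ r, ∑ a, Matrix.vecMulVec (v r a) (star (v r a)) := by
    rw [hC]; exact Finset.sum_congr rfl fun r _ => hdec r
  intro r0
  refine ⟨m r0, v r0, hdec r0, ?_⟩
  intro a U V hU hV
  let E := EuclideanSpace ℂ (PFix n × PFix n)
  let S : Fin M × Fin N → E := fun kl => WithLp.toLp 2 (swLink (U kl.1) (V kl.2))
  let L : E := WithLp.toLp 2 (linkC2 (v r0 a) U V)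
  have hLmem : L ∈ Submodule.span ℂ (Set.range S) := by
    rw [← Submodule.orthogonal_orthogonal (Submodule.span ℂ (Set.range S)),
      Submodule.mem_orthogonal]
    intro w hwmem
    have hw : ∀ k l, prW w (swLink (U k) (V l)) = 0 := by
      intro k l
      have h1 : (inner ℂ (S (k, l)) w : ℂ) = 0 :=
        hwmem (S (k, l)) (Submodule.subset_span ⟨(k, l), rfl⟩)
      have h2 : (inner ℂ w (S (k, l)) : ℂ) = 0 := by
        rw [← inner_conj_symm, h1, map_zero]
      calc prW w (swLink (U k) (V l)) = inner ℂ w (S (k, l)) := (inner_eq_prW w (S (k, l))).symm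
        _ = 0 := h2
    have h0 := key_vanish hM hN C m v hC2 hsim U V hU hV w hw r0 a
    calc (inner ℂ w L : ℂ) = prW w (linkC2 (v r0 a) U V) := inner_eq_prW w L
      _ = 0 := h0
  obtain ⟨c, hc⟩ := (Submodule.mem_span_range_iff_exists_fun ℂ).mp hLmem
  refine ⟨fun k l => c (k, l), ?_⟩
  funext pf
  have h1 : (∑ kl : Fin M × Fin N, c kl • S kl) pf = L pf := by rw [hc]
  rw [WithLp.ofLp_sum, Finset.sum_apply] at h1
  calc linkC2 (v r0 a) U V pf = L pf := rfl
    _ = ∑ kl : Fin M × Fin N, c kl * S kl pf := by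
        rw [← h1]; exact Finset.sum_congr rfl fun kl _ => rfl
    _ = ∑ k, ∑ l, c (k, l) * swLink (U k) (V l) pf := by rw [Fintype.sum_prod_type]
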